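/- arXiv:1501.01918 — 2 statements merged into one kernel-verified Lean document; each statement's English description precedes it below -/
import Mathlib

section
/- Let f : X → X be a function on a set X equipped with a well-order <. Define a simple graph G on X whose edges are the pairs {x, f(x)} for those x with x < f(x). Then every vertex of G has at most one neighbor above itself in <, and consequently G is acyclic; moreover, if a < f(a), then in the connected component of a, the distances from a and from f(a) to the <-least element of that component have different parities. -/
/-- Given `f : X → X` on a well-ordered set, the graph with edges `{x, f x}` for `x < f x`
has at most one neighbor above each vertex, hence is acyclic; moreover if `a < f a`,
then the distances from `a` and from `f a` to the least element of their connected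
component have different parities. -/
theorem stmt7 {X : Type*} [LinearOrder X] [WellFoundedLT X] (f : X → X)
    (G : SimpleGraph X)
    (hG : ∀ x y : X, G.Adj x y ↔ ((y = f x ∧ x < y) ∨ (x = f y ∧ y < x))) (a : X) :
    (∀ x y z : X, G.Adj x y → G.Adj x z → x < y → x < z → y = z) ∧
    G.IsAcyclic ∧
    (a < f a → ∀ c : X, (G.Reachable c a ∧ ∀ d : X, G.Reachable d a → c ≤ d) →
      (Even (G.dist a c) ↔ ¬ Even (G.dist (f a) c))) := by
  have part1 : ∀ x y z : X, G.Adj x y → G.Adj x z → x < y → x < z → y = z := by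
    intro x y z hxy hxz hy hz
    rw [hG] at hxy hxz
    rcases hxy with ⟨hy', _⟩ | ⟨_, hlt⟩
    · rcases hxz with ⟨hz', _⟩ | ⟨_, hlt⟩
      · rw [hy', hz']
      · exact absurd hlt (not_lt_of_gt hz)
    · exact absurd hlt (not_lt_of_gt hy)
  have hA : G.IsAcyclic := by
    intro v c hc
    -- take the least vertex of the cycle's support
    have hne : {z : X | z ∈ c.support}.Nonempty := ⟨v, c.start_mem_support⟩
    set S := {z : X | z ∈ c.support} with hS
    have hwf : WellFounded ((· < ·) : X → X → Prop) := wellFounded_lt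
    set m := hwf.min S hne with hmdef
    have hmS : m ∈ S := hwf.min_mem S hne
    have hmin : ∀ z ∈ S, ¬ z < m := fun z hz => hwf.not_lt_min S hz
    have hm : m ∈ c.support := hmS
    have hc' : (c.rotate m hm).IsCycle := hc.rotate hm
    obtain ⟨x, hmx, p, hcp⟩ := SimpleGraph.Walk.not_nil_iff.mp hc'.not_nil
    rw [hcp] at hc'
    rw [SimpleGraph.Walk.cons_isCycle_iff] at hc'
    obtain ⟨hpath, hedge⟩ := hc'
    -- the last edge of p
    have hplen : 2 ≤ p.length := by
      have h3 : 3 ≤ (c.rotate m hm).length := (hc.rotate hm).three_le_length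
      rw [hcp, SimpleGraph.Walk.length_cons] at h3
      omega
    have hpr : ¬ p.reverse.Nil := by
      rw [SimpleGraph.Walk.not_nil_iff_lt_length, SimpleGraph.Walk.length_reverse]
      omega
    obtain ⟨y, hmy, q, hq⟩ := SimpleGraph.Walk.not_nil_iff.mp hpr
    have hmyp : s(m, y) ∈ p.edges := by
      have : s(m, y) ∈ p.reverse.edges := by
        rw [hq]; simp
      rwa [SimpleGraph.Walk.edges_reverse, List.mem_reverse] at this
    have hxy : x ≠ y := by
      intro h
      rw [← h] at hmyp
      exact hedge hmyp
    -- both x, y are in the original support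
    have hmxc : s(m, x) ∈ c.edges := by
      have h1 : s(m, x) ∈ (c.rotate m hm).edges := by rw [hcp]; simp
      exact (SimpleGraph.Walk.rotate_edges c m hm).mem_iff.mp h1
    have hmyc : s(m, y) ∈ c.edges := by
      have h1 : s(m, y) ∈ (c.rotate m hm).edges := by
        rw [hcp, SimpleGraph.Walk.edges_cons]
        exact List.mem_cons_of_mem _ hmyp
      exact (SimpleGraph.Walk.rotate_edges c m hm).mem_iff.mp h1
    have hxs : x ∈ S := c.snd_mem_support_of_mem_edges hmxc
    have hys : y ∈ S := c.snd_mem_support_of_mem_edges hmyc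
    have hmx' : m < x := lt_of_le_of_ne (not_lt.mp (hmin x hxs)) hmx.ne
    have hmy' : m < y := lt_of_le_of_ne (not_lt.mp (hmin y hys)) hmy.ne
    exact hxy (part1 m x y hmx hmy hmx' hmy')
  have huniq : ∀ ⦃u w : X⦄ (p q : G.Path u w), p = q :=
    SimpleGraph.isAcyclic_iff_path_unique.mp hA
  have key : ∀ (u v : X) (p : G.Walk u v), p.IsPath → p.length = G.dist u v := by
    intro u v p hp
    obtain ⟨q, hq⟩ := p.reachable.exists_walk_length_eq_dist
    have hb : q.bypass.IsPath := q.bypass_isPath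
    have heq : (⟨p, hp⟩ : G.Path u v) = ⟨q.bypass, hb⟩ := huniq _ _
    have hlen : p.length = q.bypass.length := by
      have := congrArg (fun r : G.Path u v => (r : G.Walk u v).length) heq
      simpa using this
    have h1 : q.bypass.length ≤ q.length := q.length_bypass_le
    have h2 : G.dist u v ≤ p.length := SimpleGraph.dist_le p
    omega
  refine ⟨part1, hA, ?_⟩
  intro haf c ⟨hca, _⟩
  have adj : G.Adj a (f a) := (hG a (f a)).mpr (Or.inl ⟨rfl, haf⟩)
  obtain ⟨w, hw⟩ := hca.symm.exists_walk_length_eq_dist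
  set p := w.bypass with hpdef
  have hp : p.IsPath := w.bypass_isPath
  have hpd : p.length = G.dist a c := key a c p hp
  by_cases hfa : f a ∈ p.support
  · have htake : (p.takeUntil (f a) hfa).length = 1 := by
      have heq : (⟨p.takeUntil (f a) hfa, hp.takeUntil hfa⟩ : G.Path a (f a)) =
          SimpleGraph.Path.singleton adj := huniq _ _
      have := congrArg (fun r : G.Path a (f a) => (r : G.Walk a (f a)).length) heq
      simpa [SimpleGraph.Path.singleton] using this
    have hdrop : (p.dropUntil (f a) hfa).length = G.dist (f a) c :=
      key (f a) c _ (hp.dropUntil hfa)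
    have hsplit : (p.takeUntil (f a) hfa).length + (p.dropUntil (f a) hfa).length
        = p.length := by
      rw [← SimpleGraph.Walk.length_append, SimpleGraph.Walk.take_spec]
    have : G.dist a c = G.dist (f a) c + 1 := by omega
    rw [this, Nat.even_add_one]
  · have hq : (SimpleGraph.Walk.cons adj.symm p).IsPath := hp.cons hfa
    have : G.dist (f a) c = G.dist a c + 1 := by
      have := key (f a) c _ hq
      rw [SimpleGraph.Walk.length_cons] at this
      omega
    rw [this, Nat.even_add_one]
    tauto
end

section
/- Let M be a first-order structure with a parameter-free definable pairing function (an injective definable map p : M × M → M such that both coordinates are definable from the pair). If M satisfies Ehrenfeucht's lemma (whenever b ≠ a is parameter-free definable from a, the types of a and b over ∅ differ), then M satisfies the parametric version: whenever b ≠ a is definable from a using an additional parameter q, the types of a and b over {q} differ. -/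
open FirstOrder Language

/-- If `M` has a parameter-free definable pairing function and satisfies Ehrenfeucht's
lemma (parameter-free definability implies discernibility), then the parametric
version holds: if `b ≠ a` is definable from `a` with a parameter `q`, then the types
of `a` and `b` over `{q}` differ. -/
theorem stmt8 {L : Language} {M : Type*} [L.Structure M]
    (p : M → M → M)
    (φp : L.Formula (Fin 3))
    (hp : ∀ x y z : M, φp.Realize ![x, y, z] ↔ z = p x y)
    (hinj : ∀ x y x' y' : M, p x y = p x' y' → x = x' ∧ y = y')
    (hEL : ∀ a b : M, b ≠ a →
      (∃ φ : L.Formula (Fin 2), ∀ x : M, φ.Realize ![x, a] ↔ x = b) →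
      ∃ ψ : L.Formula (Fin 1), ψ.Realize ![a] ∧ ¬ ψ.Realize ![b]) :
    ∀ a b q : M, b ≠ a →
      (∃ φ : L.Formula (Fin 3), ∀ x : M, φ.Realize ![x, a, q] ↔ x = b) →
      ∃ ψ : L.Formula (Fin 2), ψ.Realize ![a, q] ∧ ¬ ψ.Realize ![b, q] := by
  intro a b q hne ⟨φ, hφ⟩
  -- a' = p a q, b' = p b q
  have hne' : p b q ≠ p a q := fun h => hne (hinj _ _ _ _ h).1
  -- b' is parameter-free definable from a'
  have hdef : ∃ χ : L.Formula (Fin 2), ∀ x : M, χ.Realize ![x, p a q] ↔ x = p b q := by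
    refine ⟨Formula.iExs (Fin 3)
      ((φp.relabel ![Sum.inr 0, Sum.inr 1, Sum.inl 1]) ⊓
       ((φ.relabel ![Sum.inr 2, Sum.inr 0, Sum.inr 1]) ⊓
        (φp.relabel ![Sum.inr 2, Sum.inr 1, Sum.inl 0]))), fun x => ?_⟩
    rw [Formula.realize_iExs]
    constructor
    · rintro ⟨i, h⟩
      simp only [Formula.realize_inf, Formula.realize_relabel] at h
      obtain ⟨h1, h2, h3⟩ := h
      have e1 : Sum.elim ![x, p a q] i ∘
          ![Sum.inr 0, Sum.inr 1, Sum.inl 1] = ![i 0, i 1, p a q] := by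
        funext j; fin_cases j <;> rfl
      rw [e1, hp] at h1
      obtain ⟨ha, hq⟩ := hinj _ _ _ _ h1
      have e2 : Sum.elim ![x, p a q] i ∘
          ![Sum.inr 2, Sum.inr 0, Sum.inr 1] = ![i 2, a, q] := by
        funext j; fin_cases j <;> simp [← ha, ← hq]
      rw [e2, hφ] at h2
      have e3 : Sum.elim ![x, p a q] i ∘
          ![Sum.inr 2, Sum.inr 1, Sum.inl 0] = ![b, q, x] := by
        funext j; fin_cases j <;> simp [h2, ← hq]
      rw [e3, hp] at h3
      exact h3
    · rintro rfl
      refine ⟨![a, q, b], ?_⟩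
      simp only [Formula.realize_inf, Formula.realize_relabel]
      refine ⟨?_, ?_, ?_⟩
      · have e1 : Sum.elim ![p b q, p a q] ![a, q, b] ∘
            ![Sum.inr 0, Sum.inr 1, Sum.inl 1] = ![a, q, p a q] := by
          funext j; fin_cases j <;> rfl
        rw [e1, hp]
      · have e2 : Sum.elim ![p b q, p a q] ![a, q, b] ∘
            ![Sum.inr 2, Sum.inr 0, Sum.inr 1] = ![b, a, q] := by
          funext j; fin_cases j <;> rfl
        rw [e2, hφ]
      · have e3 : Sum.elim ![p b q, p a q] ![a, q, b] ∘
            ![Sum.inr 2, Sum.inr 1, Sum.inl 0] = ![b, q, p b q] := by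
          funext j; fin_cases j <;> rfl
        rw [e3, hp]
  obtain ⟨ψ1, hψa, hψb⟩ := hEL (p a q) (p b q) hne' hdef
  refine ⟨Formula.iExs (Fin 1)
    ((φp.relabel ![Sum.inl 0, Sum.inl 1, Sum.inr 0]) ⊓ (ψ1.relabel ![Sum.inr 0])), ?_, ?_⟩
  · rw [Formula.realize_iExs]
    refine ⟨![p a q], ?_⟩
    simp only [Formula.realize_inf, Formula.realize_relabel]
    constructor
    · have e1 : Sum.elim ![a, q] ![p a q] ∘
          ![Sum.inl 0, Sum.inl 1, Sum.inr 0] = ![a, q, p a q] := by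
        funext j; fin_cases j <;> rfl
      rw [e1, hp]
    · have e2 : Sum.elim ![a, q] ![p a q] ∘
          ![Sum.inr 0] = ![p a q] := by
        funext j; fin_cases j <;> rfl
      rw [e2]; exact hψa
  · rw [Formula.realize_iExs]
    rintro ⟨i, h⟩
    simp only [Formula.realize_inf, Formula.realize_relabel] at h
    obtain ⟨h1, h2⟩ := h
    have e1 : Sum.elim ![b, q] i ∘
        ![Sum.inl 0, Sum.inl 1, Sum.inr 0] = ![b, q, i 0] := by
      funext j; fin_cases j <;> rfl
    rw [e1, hp] at h1
    have e2 : Sum.elim ![b, q] i ∘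
        ![Sum.inr 0] = ![i 0] := by
      funext j; fin_cases j <;> rfl
    rw [e2] at h2
    rw [h1] at h2
    exact hψb h2
end
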